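/- Let F₁, F₂, F₃ be closed sets covering T². If two vertical lines l_x and l_{x+γ} with 1/3 ≤ γ ≤ 1/2 each meet exactly the same two sets F_p, F_q (and not the third), then one of the covering sets has diameter at least √(γ² + 1/4) ≥ √13/6. -/

import Mathlib

open scoped Real Pointwise

/-- The Euclidean (flat) distance on the torus `T² = ℝ²/ℤ²`. -/
noncomputable def torusDist (u v : AddCircle (1:ℝ) × AddCircle (1:ℝ)) : ℝ :=
  Real.sqrt (‖u.1 - v.1‖ ^ 2 + ‖u.2 - v.2‖ ^ 2)

/-- The diameter of a subset of the flat torus. -/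
noncomputable def torusDiam (F : Set (AddCircle (1:ℝ) × AddCircle (1:ℝ))) : ℝ :=
  sSup {d | ∃ u ∈ F, ∃ v ∈ F, d = torusDist u v}

/-- `d_m(T²)`: infimum of the maximal diameter over coverings of `T²` by `m` sets. -/
noncomputable def dTor (m : ℕ) : ℝ :=
  sInf {τ | ∃ F : Fin m → Set (AddCircle (1:ℝ) × AddCircle (1:ℝ)),
    (⋃ i, F i) = Set.univ ∧ ∀ i, torusDiam (F i) ≤ τ}

/-- The vertical line (circle) `l_x = {x} × T¹` on the flat torus. -/
def vline (x : ℝ) : Set (AddCircle (1:ℝ) × AddCircle (1:ℝ)) :=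
  {p | p.1 = (x : AddCircle (1:ℝ))}

lemma torusDist_le (u v : AddCircle (1:ℝ) × AddCircle (1:ℝ)) : torusDist u v ≤ 1 := by
  have h1 : ‖u.1 - v.1‖ ≤ 1/2 := by
    simpa using AddCircle.norm_le_half_period (p := (1:ℝ)) (x := u.1 - v.1) one_ne_zero
  have h2 : ‖u.2 - v.2‖ ≤ 1/2 := by
    simpa using AddCircle.norm_le_half_period (p := (1:ℝ)) (x := u.2 - v.2) one_ne_zero
  have := Real.sqrt_le_sqrt (show ‖u.1 - v.1‖^2 + ‖u.2 - v.2‖^2 ≤ 1 by nlinarith [norm_nonneg (u.1 - v.1), norm_nonneg (u.2 - v.2)])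
  simpa only [torusDist] using this.trans (by rw [Real.sqrt_one])

lemma le_torusDiam {F : Set (AddCircle (1:ℝ) × AddCircle (1:ℝ))} {u v}
    (hu : u ∈ F) (hv : v ∈ F) : torusDist u v ≤ torusDiam F := by
  apply le_csSup
  · exact ⟨1, fun d ⟨a, _, b, _, hd⟩ => hd ▸ torusDist_le a b⟩
  · exact ⟨u, hu, v, hv, rfl⟩

theorem torus_two_bichromatic_lines (F : Fin 3 → Set (AddCircle (1:ℝ) × AddCircle (1:ℝ)))
    (hclosed : ∀ i, IsClosed (F i))
    (hcover : (⋃ i, F i) = Set.univ)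
    (p q : Fin 3) (hpq : p ≠ q)
    (x γ : ℝ) (hγ₁ : 1/3 ≤ γ) (hγ₂ : γ ≤ 1/2)
    (hxp : (vline x ∩ F p).Nonempty) (hxq : (vline x ∩ F q).Nonempty)
    (hx : ∀ r, r ≠ p → r ≠ q → vline x ∩ F r = ∅)
    (hyp : (vline (x + γ) ∩ F p).Nonempty) (hyq : (vline (x + γ) ∩ F q).Nonempty)
    (hy : ∀ r, r ≠ p → r ≠ q → vline (x + γ) ∩ F r = ∅) :
    ∃ i, Real.sqrt (γ^2 + 1/4) ≤ torusDiam (F i) := by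
  -- sets on the circle l_x
  set A : Set (AddCircle (1:ℝ)) := {y | ((x : AddCircle (1:ℝ)), y) ∈ F p} with hA
  set B : Set (AddCircle (1:ℝ)) := {y | ((x : AddCircle (1:ℝ)), y) ∈ F q} with hB
  have hcont : Continuous fun y : AddCircle (1:ℝ) => ((x : AddCircle (1:ℝ)), y) :=
    (continuous_const.prodMk continuous_id)
  have hAc : IsClosed A := (hclosed p).preimage hcont
  have hBc : IsClosed B := (hclosed q).preimage hcont
  have hcov : (Set.univ : Set (AddCircle (1:ℝ))) ⊆ A ∪ B := by
    intro y _
    have : ((x : AddCircle (1:ℝ)), y) ∈ ⋃ i, F i := hcover ▸ Set.mem_univ _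
    obtain ⟨r, hr⟩ := Set.mem_iUnion.mp this
    by_cases h1 : r = p
    · exact Or.inl (by rwa [h1] at hr)
    by_cases h2 : r = q
    · exact Or.inr (by rwa [h2] at hr)
    · exfalso
      have h := hx r h1 h2
      rw [Set.eq_empty_iff_forall_notMem] at h
      exact h _ ⟨rfl, hr⟩
  have hAne : A.Nonempty := by
    obtain ⟨⟨a, b⟩, hmem, hF⟩ := hxp
    exact ⟨b, show _ ∈ F p from hmem ▸ hF⟩
  have hBne : B.Nonempty := by
    obtain ⟨⟨a, b⟩, hmem, hF⟩ := hxq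
    exact ⟨b, show _ ∈ F q from hmem ▸ hF⟩
  have hconn : IsPreconnected (Set.univ : Set (AddCircle (1:ℝ))) :=
    isPreconnected_univ
  obtain ⟨y, -, hyA, hyB⟩ := (isPreconnected_closed_iff.mp hconn) A B hAc hBc hcov
    ⟨hAne.choose, Set.mem_univ _, hAne.choose_spec⟩ ⟨hBne.choose, Set.mem_univ _, hBne.choose_spec⟩
  -- the shifted point
  set u : AddCircle (1:ℝ) × AddCircle (1:ℝ) := ((x : ℝ), y)
  set v : AddCircle (1:ℝ) × AddCircle (1:ℝ) := (((x + γ : ℝ) : AddCircle (1:ℝ)), y + ((1/2 : ℝ) : AddCircle (1:ℝ)))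
  have hv : v ∈ F p ∪ F q := by
    have : v ∈ ⋃ i, F i := hcover ▸ Set.mem_univ _
    obtain ⟨r, hr⟩ := Set.mem_iUnion.mp this
    by_cases h1 : r = p
    · exact Or.inl (by rwa [h1] at hr)
    by_cases h2 : r = q
    · exact Or.inr (by rwa [h2] at hr)
    · exfalso
      have h := hy r h1 h2
      rw [Set.eq_empty_iff_forall_notMem] at h
      exact h _ ⟨rfl, hr⟩
  have hdist : torusDist u v = Real.sqrt (γ^2 + 1/4) := by
    have h1 : ‖u.1 - v.1‖ = γ := by
      show ‖((x : ℝ) : AddCircle (1:ℝ)) - ((x + γ : ℝ) : AddCircle (1:ℝ))‖ = γ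
      rw [← AddCircle.coe_sub]
      have : (x - (x + γ)) = -γ := by ring
      rw [this]
      have habs : |(-γ)| = γ := by rw [abs_neg, abs_of_nonneg (by linarith)]
      rw [(AddCircle.norm_coe_eq_abs_iff (p := 1) (x := -γ) one_ne_zero).mpr (by rw [habs]; simp; linarith), habs]
    have h2 : ‖u.2 - v.2‖ = 1/2 := by
      show ‖y - (y + ((1/2 : ℝ) : AddCircle (1:ℝ)))‖ = 1/2
      have : y - (y + ((1/2 : ℝ) : AddCircle (1:ℝ))) = -((1/2 : ℝ) : AddCircle (1:ℝ)) := by abel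
      rw [this, norm_neg]
      simpa using AddCircle.norm_half_period_eq (p := (1:ℝ))
    rw [torusDist, h1, h2]
    norm_num
  rcases hv with hv | hv
  · exact ⟨p, hdist ▸ le_torusDiam hyA hv⟩
  · exact ⟨q, hdist ▸ le_torusDiam hyB hv⟩
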